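/- Let Y be a measurable space, π₀ a probability measure on Y, and r : Y → ℝ measurable, with π₀ a continuous model for r. Let β > 0, let Φ : [0,1] → ℝ be bounded measurable, set C := C_{r,π₀}, Z := ∫₀¹ e^{Φ(u)/β} du, and let π* be the probability measure with density y ↦ e^{Φ(C(y))/β}/Z with respect to π₀. Then the Kullback–Leibler divergence satisfies KL(π* ‖ π₀) = (1/β)·(∫₀¹ Φ(u)·e^{Φ(u)/β} du)/(∫₀¹ e^{Φ(u)/β} du) − log(∫₀¹ e^{Φ(u)/β} du); in particular it depends only on Φ and β, not on r or π₀. -/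

import Mathlib

open MeasureTheory Set
open scoped ENNReal NNReal


/-- The pushforward of a probability measure on ℝ with no atoms under its (left-continuous
version of the) CDF `t ↦ (μ (Iio t)).toReal` is the uniform measure on `(0,1]`. -/
lemma cdf_map_uniform (μ : Measure ℝ) [IsProbabilityMeasure μ]
    (hatom : ∀ t : ℝ, μ {t} = 0) :
    μ.map (fun t => (μ (Iio t)).toReal) = volume.restrict (Ioc (0:ℝ) 1) := by
  set F : ℝ → ℝ := fun t => (μ (Iio t)).toReal with hFdef
  have hFmono : Monotone F := fun a b hab =>
    ENNReal.toReal_mono (measure_ne_top μ _) (measure_mono (Iio_subset_Iio hab))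
  have hFmeas : Measurable F := hFmono.measurable
  have hF0 : ∀ t, 0 ≤ F t := fun t => ENNReal.toReal_nonneg
  have hF1 : ∀ t, F t ≤ 1 := fun t => by
    have := prob_le_one (μ := μ) (s := Iio t)
    simpa [hFdef] using ENNReal.toReal_mono (by simp) this
  have hIicIio : ∀ t, μ (Iic t) = μ (Iio t) := by
    intro t
    refine le_antisymm ?_ (measure_mono Iio_subset_Iic_self)
    have : Iic t ⊆ Iio t ∪ {t} := by
      intro x hx
      rcases eq_or_lt_of_le (mem_Iic.1 hx) with h | h
      · exact Or.inr (by simp [h])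
      · exact Or.inl h
    calc μ (Iic t) ≤ μ (Iio t ∪ {t}) := measure_mono this
      _ ≤ μ (Iio t) + μ {t} := measure_union_le _ _
      _ = μ (Iio t) := by rw [hatom t, add_zero]
  have key : ∀ u : ℝ, 0 ≤ u → u < 1 → μ {t | F t ≤ u} = ENNReal.ofReal u := by
    intro u hu0 hu1
    set S : Set ℝ := {t | F t ≤ u} with hSdef
    -- S is bounded above
    have hBdd : BddAbove S := by
      have hUnion : ⋃ n : ℕ, Iio ((n : ℝ)) = univ := by
        ext x; simp only [mem_iUnion, mem_Iio, mem_univ, iff_true]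
        exact exists_nat_gt x
      have hmono : Monotone fun n : ℕ => Iio ((n : ℝ)) := fun a b hab =>
        Iio_subset_Iio (by exact_mod_cast hab)
      have hsup : ⨆ n : ℕ, μ (Iio ((n : ℝ))) = 1 := by
        rw [← hmono.measure_iUnion, hUnion, measure_univ]
      have : ENNReal.ofReal u < ⨆ n : ℕ, μ (Iio ((n : ℝ))) := by
        rw [hsup]; exact ENNReal.ofReal_lt_one.2 hu1
      obtain ⟨N, hN⟩ := lt_iSup_iff.1 this
      refine ⟨(N : ℝ), fun s hs => ?_⟩
      by_contra hcon
      push_neg at hcon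
      have h1 : F (N : ℝ) ≤ F s := hFmono hcon.le
      have h2 : u < F (N : ℝ) :=
        (ENNReal.ofReal_lt_iff_lt_toReal hu0 (measure_ne_top μ _)).1 hN
      exact absurd (hs : F s ≤ u) (not_le.2 (lt_of_lt_of_le h2 h1))
    rcases eq_empty_or_nonempty S with hS | hS
    · -- empty: u must be 0
      have hu0' : u = 0 := by
        by_contra hne
        have hupos : 0 < u := lt_of_le_of_ne hu0 (Ne.symm hne)
        have hInter : ⋂ n : ℕ, Iio (-(n : ℝ)) = ∅ := by
          ext x; simp only [mem_iInter, mem_Iio, mem_empty_iff_false, iff_false, not_forall,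
            not_lt]
          obtain ⟨n, hn⟩ := exists_nat_gt (-x)
          exact ⟨n, by linarith⟩
        have hanti : Antitone fun n : ℕ => Iio (-(n : ℝ)) := fun a b hab =>
          Iio_subset_Iio (by exact_mod_cast neg_le_neg (by exact_mod_cast hab))
        have hinf : ⨅ n : ℕ, μ (Iio (-(n : ℝ))) = 0 := by
          rw [← hanti.measure_iInter (fun n => (measurableSet_Iio).nullMeasurableSet)
            ⟨0, measure_ne_top μ _⟩, hInter, measure_empty]
        have : ⨅ n : ℕ, μ (Iio (-(n : ℝ))) < ENNReal.ofReal u := by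
          rw [hinf]; exact ENNReal.ofReal_pos.2 hupos
        obtain ⟨N, hN⟩ := iInf_lt_iff.1 this
        have : F (-(N : ℝ)) ≤ u := by
          have := ENNReal.toReal_mono (ENNReal.ofReal_ne_top) hN.le
          rwa [ENNReal.toReal_ofReal hu0] at this
        have hmem : (-(N:ℝ)) ∈ S := by rw [hSdef]; exact this
        exact (Set.nonempty_iff_ne_empty.1 ⟨_, hmem⟩) hS
      rw [hS, measure_empty, hu0', ENNReal.ofReal_zero]
    · -- nonempty
      set t₀ : ℝ := sSup S with ht₀
      have hsub1 : S ⊆ Iic t₀ := fun s hs => le_csSup hBdd hs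
      have hsub2 : Iio t₀ ⊆ S := by
        intro s hs
        obtain ⟨s', hs', hss'⟩ := exists_lt_of_lt_csSup hS hs
        exact le_trans (hFmono hss'.le) hs'
      -- upper bound : μ (Iio t₀) ≤ ofReal u
      have hupper : μ (Iio t₀) ≤ ENNReal.ofReal u := by
        have hUnion : ⋃ n : ℕ, Iio (t₀ - 1 / ((n : ℝ) + 1)) = Iio t₀ := by
          ext x
          simp only [mem_iUnion, mem_Iio]
          constructor
          · rintro ⟨n, hn⟩
            have : (0:ℝ) < 1 / ((n : ℝ) + 1) := by positivity
            linarith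
          · intro hx
            obtain ⟨n, hn⟩ := exists_nat_one_div_lt (sub_pos.2 hx)
            exact ⟨n, by linarith⟩
        have hmono : Monotone fun n : ℕ => Iio (t₀ - 1 / ((n : ℝ) + 1)) := by
          intro a b hab
          apply Iio_subset_Iio
          have : 1 / ((b : ℝ) + 1) ≤ 1 / ((a : ℝ) + 1) := by
            apply one_div_le_one_div_of_le (by positivity)
            exact_mod_cast add_le_add_left (Nat.cast_le.2 hab) 1
          linarith
        rw [← hUnion, hmono.measure_iUnion]
        refine iSup_le fun n => ?_
        have hmem : t₀ - 1 / ((n : ℝ) + 1) ∈ S ∪ Iio t₀ := by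
          right; simp only [mem_Iio]; have : (0:ℝ) < 1 / ((n : ℝ) + 1) := by positivity
          linarith
        have hFle : F (t₀ - 1 / ((n : ℝ) + 1)) ≤ u := by
          rcases hmem with h | h
          · exact h
          · exact hsub2 h
        exact (ENNReal.le_ofReal_iff_toReal_le (measure_ne_top μ _) hu0).2 hFle
      -- lower bound : ofReal u ≤ μ (Iic t₀)
      have hlower : ENNReal.ofReal u ≤ μ (Iic t₀) := by
        have hInter : ⋂ n : ℕ, Iio (t₀ + 1 / ((n : ℝ) + 1)) = Iic t₀ := by
          ext x
          simp only [mem_iInter, mem_Iio, mem_Iic]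
          constructor
          · intro h
            by_contra hcon
            push_neg at hcon
            obtain ⟨n, hn⟩ := exists_nat_one_div_lt (sub_pos.2 hcon)
            have := h n
            linarith
          · intro hx n
            have : (0:ℝ) < 1 / ((n : ℝ) + 1) := by positivity
            linarith
        have hanti : Antitone fun n : ℕ => Iio (t₀ + 1 / ((n : ℝ) + 1)) := by
          intro a b hab
          apply Iio_subset_Iio
          have : 1 / ((b : ℝ) + 1) ≤ 1 / ((a : ℝ) + 1) := by
            apply one_div_le_one_div_of_le (by positivity)
            exact_mod_cast add_le_add_left (Nat.cast_le.2 hab) 1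
          linarith
        rw [← hInter, hanti.measure_iInter (fun n => (measurableSet_Iio).nullMeasurableSet)
          ⟨0, measure_ne_top μ _⟩]
        refine le_iInf fun n => ?_
        have hnot : t₀ + 1 / ((n : ℝ) + 1) ∉ S := by
          intro hmem
          have := le_csSup hBdd hmem
          have hpos : (0:ℝ) < 1 / ((n : ℝ) + 1) := by positivity
          linarith
        have : u < F (t₀ + 1 / ((n : ℝ) + 1)) := not_le.1 hnot
        exact ((ENNReal.ofReal_lt_iff_lt_toReal hu0 (measure_ne_top μ _)).2 this).le
      have heq : μ (Iio t₀) = ENNReal.ofReal u :=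
        le_antisymm hupper (le_trans hlower (hIicIio t₀).le)
      refine le_antisymm ?_ ?_
      · calc μ S ≤ μ (Iic t₀) := measure_mono hsub1
          _ = μ (Iio t₀) := hIicIio t₀
          _ = ENNReal.ofReal u := heq
      · calc ENNReal.ofReal u = μ (Iio t₀) := heq.symm
          _ ≤ μ S := measure_mono hsub2
  -- now extensionality via Iic
  have hmapfin : IsProbabilityMeasure (μ.map F) :=
    Measure.isProbabilityMeasure_map hFmeas.aemeasurable
  refine Measure.ext_of_Iic _ _ fun u => ?_
  rw [Measure.map_apply hFmeas measurableSet_Iic, Measure.restrict_apply measurableSet_Iic]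
  have hpre : F ⁻¹' Iic u = {t | F t ≤ u} := rfl
  rw [hpre]
  rcases lt_or_ge u 0 with hu | hu
  · have h1 : {t | F t ≤ u} = ∅ := by
      ext t; simp only [mem_setOf_eq, mem_empty_iff_false, iff_false, not_le]
      exact lt_of_lt_of_le hu (hF0 t)
    have h2 : Iic u ∩ Ioc (0:ℝ) 1 = ∅ := by
      ext x; simp only [mem_inter_iff, mem_Iic, mem_Ioc, mem_empty_iff_false, iff_false]
      rintro ⟨h, h0, -⟩; linarith
    simp [h1, h2]
  rcases lt_or_ge u 1 with hu1 | hu1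
  · rw [key u hu hu1]
    have h2 : Iic u ∩ Ioc (0:ℝ) 1 = Ioc 0 u := by
      ext x; simp only [mem_inter_iff, mem_Iic, mem_Ioc]
      constructor
      · rintro ⟨h, h0, h1⟩; exact ⟨h0, h⟩
      · rintro ⟨h0, h⟩; exact ⟨h, h0, by linarith⟩
    rw [h2, Real.volume_Ioc, sub_zero]
  · have h1 : {t | F t ≤ u} = univ := by
      ext t; simp only [mem_setOf_eq, mem_univ, iff_true]
      exact le_trans (hF1 t) hu1
    have h2 : Iic u ∩ Ioc (0:ℝ) 1 = Ioc 0 1 := by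
      rw [inter_eq_right]
      intro x hx; exact le_trans hx.2 hu1
    rw [h1, h2, measure_univ, Real.volume_Ioc]
    norm_num

/-- In the setting of Statement 10, the KL divergence
`KL(π*‖π₀) = ∫ log(dπ*/dπ₀) dπ*` equals
`(1/β)·(∫₀¹ Φ(u)e^{Φ(u)/β} du)/(∫₀¹ e^{Φ(u)/β} du) − log ∫₀¹ e^{Φ(u)/β} du`;
in particular it depends only on `Φ` and `β`. -/
theorem stmt_12 {Y : Type*} [MeasurableSpace Y]
    (π₀ : Measure Y) [IsProbabilityMeasure π₀]
    (r : Y → ℝ) (hr : Measurable r)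
    (hcont : ∀ t : ℝ, π₀ {z | r z = t} = 0)
    (β : ℝ) (hβ : 0 < β)
    (Φ : ℝ → ℝ) (hΦm : Measurable Φ)
    (hΦb : ∃ M, ∀ u ∈ Set.Icc (0 : ℝ) 1, |Φ u| ≤ M)
    (C : Y → ℝ)
    (hC : ∀ y, C y = (π₀ {z | r z < r y}).toReal + (1 / 2) * (π₀ {z | r z = r y}).toReal)
    (Z : ℝ) (hZ : Z = ∫ u in (0 : ℝ)..1, Real.exp (Φ u / β))
    (πstar : Measure Y)
    (hπstar : πstar = π₀.withDensity fun y => ENNReal.ofReal (Real.exp (Φ (C y) / β) / Z)) :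
    (∫ y, Real.log (πstar.rnDeriv π₀ y).toReal ∂πstar)
      = (1 / β) * ((∫ u in (0 : ℝ)..1, Φ u * Real.exp (Φ u / β))
            / ∫ u in (0 : ℝ)..1, Real.exp (Φ u / β))
        - Real.log (∫ u in (0 : ℝ)..1, Real.exp (Φ u / β)) := by
  obtain ⟨M₀, hM₀⟩ := hΦb
  set M : ℝ := max M₀ 0 with hMdef
  have hM : ∀ u ∈ Set.Icc (0:ℝ) 1, |Φ u| ≤ M := fun u hu => (hM₀ u hu).trans (le_max_left _ _)
  have hMnn : 0 ≤ M := le_max_right _ _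
  -- the pushforward measure of r and its CDF
  set μ : Measure ℝ := π₀.map r with hμ
  have hμprob : IsProbabilityMeasure μ := Measure.isProbabilityMeasure_map hr.aemeasurable
  have hatom : ∀ t : ℝ, μ {t} = 0 := fun t => by
    rw [hμ, Measure.map_apply hr (measurableSet_singleton t)]; exact hcont t
  set F : ℝ → ℝ := fun t => (μ (Iio t)).toReal with hFdef
  have hFmono : Monotone F := fun a b hab =>
    ENNReal.toReal_mono (measure_ne_top μ _) (measure_mono (Iio_subset_Iio hab))
  have hFmeas : Measurable F := hFmono.measurable
  have hCF : C = fun y => F (r y) := by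
    funext y
    rw [hC y, hcont (r y)]
    have h1 : π₀ {z | r z < r y} = μ (Iio (r y)) := by
      rw [hμ, Measure.map_apply hr measurableSet_Iio]; rfl
    simp [h1, hFdef]
  have hCmeas : Measurable C := by rw [hCF]; exact hFmeas.comp hr
  have hmap : π₀.map C = volume.restrict (Set.Ioc (0:ℝ) 1) := by
    rw [hCF]
    have hcomp : (fun y => F (r y)) = F ∘ r := rfl
    rw [hcomp, ← Measure.map_map hFmeas hr, ← hμ]
    exact cdf_map_uniform μ hatom
  have hC01 : ∀ y, C y ∈ Set.Icc (0:ℝ) 1 := by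
    intro y
    rw [hCF]
    refine ⟨ENNReal.toReal_nonneg, ?_⟩
    have := prob_le_one (μ := μ) (s := Iio (r y))
    simpa [hFdef] using ENNReal.toReal_mono (by simp) this
  -- integrability machinery on (0,1]
  have hfin : IsFiniteMeasure (volume.restrict (Set.Ioc (0:ℝ) 1)) := by
    constructor
    rw [Measure.restrict_apply_univ, Real.volume_Ioc]
    simp
  have hint : ∀ (h : ℝ → ℝ), Measurable h → ∀ B : ℝ, (∀ u ∈ Set.Icc (0:ℝ) 1, |h u| ≤ B) →
      IntegrableOn h (Set.Ioc (0:ℝ) 1) volume := by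
    intro h hhm B hB
    refine Integrable.mono' (integrable_const B) hhm.aestronglyMeasurable.restrict ?_
    filter_upwards [ae_restrict_mem measurableSet_Ioc] with u hu
    exact hB u ⟨hu.1.le, hu.2⟩
  set eΦ : ℝ → ℝ := fun u => Real.exp (Φ u / β) with heΦdef
  have heΦmeas : Measurable eΦ := Real.measurable_exp.comp (hΦm.div_const β)
  have heΦbound : ∀ u ∈ Set.Icc (0:ℝ) 1,
      Real.exp (-(M/β)) ≤ eΦ u ∧ eΦ u ≤ Real.exp (M/β) := by
    intro u hu
    have h1 := abs_le.1 (hM u hu)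
    constructor
    · exact Real.exp_le_exp.2 (by rw [← neg_div]; exact (div_le_div_iff_of_pos_right hβ).2 h1.1)
    · exact Real.exp_le_exp.2 ((div_le_div_iff_of_pos_right hβ).2 h1.2)
  have hintExp : IntegrableOn eΦ (Set.Ioc (0:ℝ) 1) volume := by
    refine hint eΦ heΦmeas (Real.exp (M/β)) fun u hu => ?_
    rw [abs_of_pos (Real.exp_pos _)]
    exact (heΦbound u hu).2
  have hintPhiExp : IntegrableOn (fun u => Φ u * eΦ u) (Set.Ioc (0:ℝ) 1) volume := by
    refine hint _ (hΦm.mul heΦmeas) (M * Real.exp (M/β)) fun u hu => ?_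
    rw [abs_mul, abs_of_pos (Real.exp_pos _)]
    exact mul_le_mul (hM u hu) (heΦbound u hu).2 (Real.exp_pos _).le hMnn
  have hZeq : Z = ∫ u in Set.Ioc (0:ℝ) 1, eΦ u := by
    rw [hZ, intervalIntegral.integral_of_le zero_le_one]
  have hZpos : 0 < Z := by
    have hconst : ∫ _ in Set.Ioc (0:ℝ) 1, Real.exp (-(M/β)) ∂volume = Real.exp (-(M/β)) := by
      rw [setIntegral_const]
      rw [Real.volume_real_Ioc]
      simp
    have hle : ∫ _ in Set.Ioc (0:ℝ) 1, Real.exp (-(M/β)) ∂volume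
        ≤ ∫ u in Set.Ioc (0:ℝ) 1, eΦ u := by
      refine setIntegral_mono_on (integrable_const _) hintExp measurableSet_Ioc fun u hu => ?_
      exact (heΦbound u ⟨hu.1.le, hu.2⟩).1
    rw [hZeq]
    calc (0:ℝ) < Real.exp (-(M/β)) := Real.exp_pos _
      _ = _ := hconst.symm
      _ ≤ _ := hle
  -- the density function
  set g : Y → ℝ := fun y => Real.exp (Φ (C y) / β) / Z with hgdef
  have hgmeas : Measurable g := (Real.measurable_exp.comp ((hΦm.comp hCmeas).div_const β)).div_const Z
  have hgpos : ∀ y, 0 < g y := fun y => div_pos (Real.exp_pos _) hZpos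
  have hac : πstar ≪ π₀ := by rw [hπstar]; exact withDensity_absolutelyContinuous _ _
  have hrn : πstar.rnDeriv π₀ =ᵐ[π₀] fun y => ENNReal.ofReal (g y) := by
    rw [hπstar]
    exact Measure.rnDeriv_withDensity π₀ (ENNReal.measurable_ofReal.comp hgmeas)
  have hlog : (fun y => Real.log (πstar.rnDeriv π₀ y).toReal)
      =ᵐ[πstar] fun y => Φ (C y) / β - Real.log Z := by
    filter_upwards [hrn.filter_mono hac.ae_le] with y hy
    rw [hy, ENNReal.toReal_ofReal (hgpos y).le, hgdef]
    rw [Real.log_div (Real.exp_ne_zero _) (ne_of_gt hZpos), Real.log_exp]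
  set h : ℝ → ℝ := fun u => (eΦ u / Z) * (Φ u / β - Real.log Z) with hhdef
  have hhmeas : Measurable h := (heΦmeas.div_const Z).mul ((hΦm.div_const β).sub_const _)
  have step1 : (∫ y, Real.log (πstar.rnDeriv π₀ y).toReal ∂πstar)
      = ∫ y, h (C y) ∂π₀ := by
    rw [integral_congr_ae hlog, hπstar]
    have hd : (fun y => ENNReal.ofReal (g y)) = fun y => ((g y).toNNReal : ℝ≥0∞) := rfl
    rw [hd, integral_withDensity_eq_integral_smul (hgmeas.real_toNNReal) _]
    congr 1
    funext y
    rw [NNReal.smul_def, Real.coe_toNNReal _ (hgpos y).le]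
    simp only [hhdef, hgdef, heΦdef, smul_eq_mul]
  have step2 : ∫ y, h (C y) ∂π₀ = ∫ u in Set.Ioc (0:ℝ) 1, h u := by
    rw [← hmap]
    exact (integral_map hCmeas.aemeasurable hhmeas.aestronglyMeasurable).symm
  have hsplit : ∀ u : ℝ, h u = (1/(β*Z)) * (Φ u * eΦ u) - (Real.log Z / Z) * eΦ u := by
    intro u
    rw [hhdef]
    field_simp
  have step3 : ∫ u in Set.Ioc (0:ℝ) 1, h u
      = (1/(β*Z)) * (∫ u in Set.Ioc (0:ℝ) 1, Φ u * eΦ u) - (Real.log Z / Z) * Z := by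
    calc ∫ u in Set.Ioc (0:ℝ) 1, h u
        = ∫ u in Set.Ioc (0:ℝ) 1,
            ((1/(β*Z)) * (Φ u * eΦ u) - (Real.log Z / Z) * eΦ u) := by
          exact setIntegral_congr_fun measurableSet_Ioc fun u _ => hsplit u
      _ = (∫ u in Set.Ioc (0:ℝ) 1, (1/(β*Z)) * (Φ u * eΦ u))
            - ∫ u in Set.Ioc (0:ℝ) 1, (Real.log Z / Z) * eΦ u :=
          integral_sub (hintPhiExp.const_mul _) (hintExp.const_mul _)
      _ = (1/(β*Z)) * (∫ u in Set.Ioc (0:ℝ) 1, Φ u * eΦ u) - (Real.log Z / Z) * Z := by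
          rw [integral_const_mul, integral_const_mul, ← hZeq]
  rw [step1, step2, step3]
  rw [intervalIntegral.integral_of_le zero_le_one, intervalIntegral.integral_of_le zero_le_one,
    ← hZeq]
  field_simp
  rfl
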